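/- arXiv:2411.08426 — 2 statements merged into one kernel-verified Lean document; each statement's English description precedes it below -/
import Mathlib

section
/- Let n ≥ 1 and S = {s_1 < ... < s_r} ⊆ [n-1], with s_0 = 0, s_{r+1} = n. The number of Cayley permutations w of [n] with strict ascent set Asc°(w) = {i : w(i) < w(i+1)} contained in S equals Σ_{k=0}^{n} Σ_{i=0}^{k} (-1)^i C(k,i) Π_{j=0}^{r} ⟨(k-i) over (s_{j+1} - s_j)⟩, where ⟨m over a⟩ = C(m + a - 1, a). -/
open Finset

def IsCayley {n : ℕ} (w : Fin n → ℕ) : Prop :=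
  ∃ k ≤ n, Set.range w = Set.Icc 1 k

def ascSetS {n : ℕ} (w : Fin n → ℕ) : Finset ℕ :=
  (Finset.univ.filter (fun i : Fin (n - 1) =>
    w ⟨i.val, by have := i.isLt; omega⟩ < w ⟨i.val + 1, by have := i.isLt; omega⟩)).image
    (fun i => i.val + 1)

lemma ascSetS_subset_iff {n : ℕ} (w : Fin n → ℕ) (S : Finset ℕ) :
    ascSetS w ⊆ S ↔ ∀ (p : ℕ) (h : p + 1 < n),
      w ⟨p, Nat.lt_of_succ_lt h⟩ < w ⟨p + 1, h⟩ → p + 1 ∈ S := by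
  constructor
  · intro hs p h hlt
    apply hs
    rw [ascSetS, Finset.mem_image]
    refine ⟨⟨p, by omega⟩, ?_, rfl⟩
    rw [Finset.mem_filter]
    exact ⟨Finset.mem_univ _, hlt⟩
  · intro H x hx
    rw [ascSetS, Finset.mem_image] at hx
    obtain ⟨i, hi, rfl⟩ := hx
    rw [Finset.mem_filter] at hi
    exact H i.val (by have := i.isLt; omega) hi.2

lemma chain_le {n : ℕ} {w : Fin n → ℕ} {S : Finset ℕ} (hasc : ascSetS w ⊆ S) :
    ∀ (d p : ℕ) (h : p + d < n), (∀ t, p < t → t ≤ p + d → t ∉ S) →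
      w ⟨p + d, h⟩ ≤ w ⟨p, Nat.lt_of_le_of_lt (Nat.le_add_right p d) h⟩ := by
  have H := (ascSetS_subset_iff w S).1 hasc
  intro d
  induction d with
  | zero => intro p h _; exact le_refl _
  | succ d ih =>
    intro p h hnot
    have h1 : w ⟨p + d + 1, h⟩ ≤ w ⟨p + d, Nat.lt_of_succ_lt h⟩ := by
      by_contra hc
      push_neg at hc
      exact hnot (p + d + 1) (by omega) (by omega) (H (p + d) h hc)
    have h2 := ih p (by omega) (fun t ht1 ht2 => hnot t ht1 (by omega))
    exact le_trans h1 h2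

lemma depapp_congr {m : ℕ} {len : Fin m → ℕ} (v : ∀ j : Fin m, Fin (len j) → ℕ)
    {j1 j2 : Fin m} (h : j1 = j2) {i1 : Fin (len j1)} {i2 : Fin (len j2)}
    (hi : i1.val = i2.val) : v j1 i1 = v j2 i2 := by
  subst h
  exact congrArg _ (Fin.ext hi)

def antiSet (a k : ℕ) : Finset (Fin a → ℕ) :=
  (Fintype.piFinset fun _ : Fin a => Finset.Icc 1 k).filter
    (fun v => ∀ i1 i2 : Fin a, i1 ≤ i2 → v i2 ≤ v i1)

lemma mem_antiSet {a k : ℕ} {v : Fin a → ℕ} :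
    v ∈ antiSet a k ↔ (∀ i, v i ∈ Finset.Icc 1 k) ∧
      ∀ i1 i2 : Fin a, i1 ≤ i2 → v i2 ≤ v i1 := by
  simp [antiSet, Fintype.mem_piFinset]

lemma strictMono_gap {a : ℕ} {f : Fin a → ℕ} (hf : StrictMono f) :
    ∀ (d : ℕ) (i1 i2 : Fin a), i1.val + d = i2.val → f i1 + d ≤ f i2 := by
  intro d
  induction d with
  | zero =>
    intro i1 i2 h
    have : i1 = i2 := Fin.ext (by omega)
    subst this; omega
  | succ d ih =>
    intro i1 i2 h
    have hm : i1.val + d < a := by omega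
    have h1 := ih i1 ⟨i1.val + d, hm⟩ rfl
    have h2 : f ⟨i1.val + d, hm⟩ < f i2 := hf (by simp [Fin.lt_def]; omega)
    omega

lemma card_antiSet (a k : ℕ) : (antiSet a k).card = (k + a - 1).choose a := by
  rcases Nat.eq_zero_or_pos a with ha | ha
  · subst ha
    rw [show (antiSet 0 k) = {(fun i => i.elim0)} from ?_]
    · simp
    · ext v
      simp only [mem_antiSet, Finset.mem_singleton]
      constructor
      · intro _; funext i; exact i.elim0
      · rintro rfl; exact ⟨fun i => i.elim0, fun i => i.elim0⟩
  rcases Nat.eq_zero_or_pos k with hk | hk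
  · subst hk
    have he : antiSet a 0 = ∅ := by
      rw [Finset.eq_empty_iff_forall_notMem]
      intro v hv
      have := (mem_antiSet.1 hv).1 ⟨0, ha⟩
      simp at this
    rw [he, Finset.card_empty, eq_comm]
    exact Nat.choose_eq_zero_of_lt (by omega)
  -- main case
  have hc : (Finset.Icc 1 (k + a - 1)).card = k + a - 1 := by
    rw [Nat.card_Icc]; omega
  have hcard : ((Finset.Icc 1 (k + a - 1)).powersetCard a).card = (k + a - 1).choose a := by
    rw [Finset.card_powersetCard, hc]
  rw [← hcard]
  refine Finset.card_bij'
    (fun v _ => Finset.image (fun i : Fin a => v i + (a - 1 - i.val)) Finset.univ)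
    (fun T hT => fun i : Fin a =>
      T.orderEmbOfFin (Finset.mem_powersetCard.1 hT).2 i.rev - (a - 1 - i.val))
    ?_ ?_ ?_ ?_
  · -- forward maps into powersetCard
    intro v hv
    obtain ⟨hb, hanti⟩ := mem_antiSet.1 hv
    have hbnd : ∀ i : Fin a, 1 ≤ v i ∧ v i ≤ k := by
      intro i; have := hb i; simp at this; exact this
    have hinj : Function.Injective (fun i : Fin a => v i + (a - 1 - i.val)) := by
      intro i1 i2 he
      by_contra hne
      rcases lt_or_gt_of_ne (fun h : i1 = i2 => hne h) with h | h
      · have := hanti i1 i2 h.le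
        have h1 := i1.isLt; have h2 := i2.isLt
        have : i1.val < i2.val := h
        simp only at he; omega
      · have := hanti i2 i1 h.le
        have h1 := i1.isLt; have h2 := i2.isLt
        have : i2.val < i1.val := h
        simp only at he; omega
    rw [Finset.mem_powersetCard]
    constructor
    · intro x hx
      rw [Finset.mem_image] at hx
      obtain ⟨i, _, rfl⟩ := hx
      have := hbnd i; have := i.isLt
      simp only [Finset.mem_Icc]; omega
    · rw [Finset.card_image_of_injective _ hinj, Finset.card_univ, Fintype.card_fin]
  · -- backward maps into antiSet
    intro T hT
    beta_reduce
    have hsub := (Finset.mem_powersetCard.1 hT).1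
    set e := T.orderEmbOfFin (Finset.mem_powersetCard.1 hT).2 with he_def
    have hemem : ∀ i : Fin a, 1 ≤ e i ∧ e i ≤ k + a - 1 := fun i => by
      have := hsub (T.orderEmbOfFin_mem (Finset.mem_powersetCard.1 hT).2 i)
      simpa using this
    have hgap : ∀ i : Fin a, i.val + 1 ≤ e i ∧ e i ≤ k + i.val := by
      intro i
      have h1 := strictMono_gap (e.strictMono) i.val ⟨0, ha⟩ i (by simp)
      have h2 := strictMono_gap (e.strictMono) (a - 1 - i.val) i ⟨a - 1, by omega⟩
        (by simp; omega)
      have e1 := (hemem ⟨0, ha⟩).1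
      have e2 := (hemem ⟨a - 1, by omega⟩).2
      have := i.isLt
      omega
    rw [mem_antiSet]
    constructor
    · intro i
      have h1 := hgap i.rev
      have hrv : i.rev.val = a - 1 - i.val := by simp [Fin.rev]; omega
      have := i.isLt
      simp only [Finset.mem_Icc]
      omega
    · intro i1 i2 hle
      have hr1 : i1.rev.val = a - 1 - i1.val := by simp [Fin.rev]; omega
      have hr2 : i2.rev.val = a - 1 - i2.val := by simp [Fin.rev]; omega
      have hl : (i1:ℕ) ≤ i2 := hle
      have hg := strictMono_gap (e.strictMono) (i1.rev.val - i2.rev.val) i2.rev i1.rev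
        (by have := i1.isLt; have := i2.isLt; omega)
      have g1 := hgap i1.rev
      have g2 := hgap i2.rev
      have := i1.isLt; have := i2.isLt
      omega
  · -- left inverse
    intro v hv
    beta_reduce
    obtain ⟨hb, hanti⟩ := mem_antiSet.1 hv
    have hbnd : ∀ i : Fin a, 1 ≤ v i ∧ v i ≤ k := by
      intro i; have := hb i; simpa using this
    set T := Finset.image (fun i : Fin a => v i + (a - 1 - i.val)) Finset.univ with hT_def
    have hrv : ∀ i : Fin a, i.rev.val = a - 1 - i.val := by
      intro i; simp [Fin.rev]; have := i.isLt; omega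
    have hg : ∀ (h : T.card = a), ∀ i : Fin a, T.orderEmbOfFin h i = v i.rev + i.val := by
      intro h
      have hmono : StrictMono (fun i : Fin a => v i.rev + i.val) := by
        intro i1 i2 hlt
        have hrev : i2.rev ≤ i1.rev := by
          rw [Fin.le_def, hrv, hrv]
          have hl : (i1:ℕ) < i2 := hlt
          have := i2.isLt; omega
        have := hanti i2.rev i1.rev hrev
        have hl : (i1:ℕ) < i2 := hlt
        simp only
        omega
      have hmem : ∀ i : Fin a, v i.rev + i.val ∈ T := by
        intro i
        rw [hT_def, Finset.mem_image]
        refine ⟨i.rev, Finset.mem_univ _, ?_⟩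
        congr 1
        rw [hrv]
        have := i.isLt; omega
      have := (Finset.orderEmbOfFin_unique h hmem hmono).symm
      intro i
      exact congrFun this i
    funext i
    rw [hg _ i.rev, Fin.rev_rev, hrv]
    have := i.isLt
    have := (hbnd i).1
    omega
  · -- right inverse
    intro T hT
    beta_reduce
    have hsub := (Finset.mem_powersetCard.1 hT).1
    set e := T.orderEmbOfFin (Finset.mem_powersetCard.1 hT).2 with he_def
    have hemem : ∀ i : Fin a, 1 ≤ e i ∧ e i ≤ k + a - 1 := fun i => by
      have := hsub (T.orderEmbOfFin_mem (Finset.mem_powersetCard.1 hT).2 i)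
      simpa using this
    have hgap : ∀ i : Fin a, i.val + 1 ≤ e i := by
      intro i
      have h1 := strictMono_gap (e.strictMono) i.val ⟨0, ha⟩ i (by simp)
      have := (hemem ⟨0, ha⟩).1
      omega
    have hrv : ∀ i : Fin a, i.rev.val = a - 1 - i.val := by
      intro i; simp [Fin.rev]; have := i.isLt; omega
    have hval : ∀ i : Fin a, (e i.rev - (a - 1 - i.val)) + (a - 1 - i.val) = e i.rev := by
      intro i
      have h1 := hgap i.rev
      rw [hrv] at h1
      omega
    ext x
    simp only [Finset.mem_image, Finset.mem_univ, true_and]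
    constructor
    · rintro ⟨i, rfl⟩
      rw [hval i]
      exact T.orderEmbOfFin_mem (Finset.mem_powersetCard.1 hT).2 i.rev
    · intro hx
      have hxr : x ∈ Set.range e := by rw [he_def, Finset.range_orderEmbOfFin]; exact hx
      obtain ⟨i, rfl⟩ := hxr
      refine ⟨i.rev, ?_⟩
      have h2 := hval i.rev
      rw [Fin.rev_rev] at h2 ⊢
      exact h2
lemma card_block (n r k : ℕ) (hn : 1 ≤ n) (s : ℕ → ℕ) (hs0 : s 0 = 0) (hsn : s (r + 1) = n)
    (hmono : ∀ j ≤ r, s j < s (j + 1)) (S : Finset ℕ) (hS : S = (Finset.Icc 1 r).image s) :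
    ((Fintype.piFinset fun _ : Fin n => Finset.Icc 1 k).filter (fun w => ascSetS w ⊆ S)).card
      = ∏ j ∈ Finset.range (r + 1), (k + (s (j + 1) - s j) - 1).choose (s (j + 1) - s j) := by
  classical
  have hmono' : ∀ j1 j2, j1 ≤ j2 → j2 ≤ r + 1 → s j1 ≤ s j2 := by
    have hsle : ∀ d j, j + d ≤ r + 1 → s j ≤ s (j + d) := by
      intro d
      induction d with
      | zero => intro j _; exact le_refl _
      | succ d ih =>
        intro j h
        have h1 := ih j (by omega)
        have h2 := hmono (j + d) (by omega)
        rw [show j + (d + 1) = j + d + 1 by omega]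
        omega
    intro j1 j2 h1 h2
    have := hsle (j2 - j1) j1 (by omega)
    rw [show j1 + (j2 - j1) = j2 by omega] at this
    exact this
  set blk : ℕ → ℕ := fun i => Nat.findGreatest (fun j => s j ≤ i) r with hblk_def
  have blk_le : ∀ i, blk i ≤ r := fun i => Nat.findGreatest_le r
  have blk_le' : ∀ i, s (blk i) ≤ i := fun i =>
    Nat.findGreatest_spec (P := fun j => s j ≤ i) (Nat.zero_le r) (by simp [hs0])
  have blk_gt : ∀ i, i < n → i < s (blk i + 1) := by
    intro i hi
    by_cases h : blk i = r
    · rw [h, hsn]; exact hi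
    · by_contra hc
      push_neg at hc
      exact Nat.findGreatest_is_greatest (P := fun j => s j ≤ i) (Nat.lt_succ_self _)
        (by show blk i + 1 ≤ r; have := blk_le i; omega) hc
  have blk_eq : ∀ i j, j ≤ r → s j ≤ i → i < s (j + 1) → blk i = j := by
    intro i j hj h1 h2
    have hle : j ≤ blk i := Nat.le_findGreatest hj h1
    by_contra hne
    have hlt : j < blk i := by omega
    have h3 := hmono' (j + 1) (blk i) (by omega) (by have := blk_le i; omega)
    have h4 := blk_le' i
    omega
  have notinS : ∀ j t, j ≤ r → s j < t → t < s (j + 1) → t ∉ S := by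
    intro j t hj h1 h2 ht
    rw [hS, Finset.mem_image] at ht
    obtain ⟨m, hm, rfl⟩ := ht
    rw [Finset.mem_Icc] at hm
    rcases le_or_gt m j with h | h
    · have := hmono' m j h (by omega); omega
    · have := hmono' (j + 1) m h (by omega); omega
  have hsub1 : ∀ (j : Fin (r + 1)) (i : Fin (s (j.val + 1) - s j.val)),
      s j.val + i.val < n := by
    intro j i
    have hj := j.isLt
    have h1 := i.isLt
    have h2 := hmono' (j.val + 1) (r + 1) (by omega) (le_refl _)
    omega
  rw [show ∏ j ∈ Finset.range (r + 1), (k + (s (j + 1) - s j) - 1).choose (s (j + 1) - s j)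
      = ∏ j : Fin (r + 1), (antiSet (s (j.val + 1) - s j.val) k).card by
    rw [← Fin.prod_univ_eq_prod_range]
    exact Finset.prod_congr rfl fun j _ => (card_antiSet _ _).symm]
  rw [← Fintype.card_piFinset]
  have hblt : ∀ q : ℕ, blk q < r + 1 := fun q => Nat.lt_succ_of_le (blk_le q)
  have hidx : ∀ q : ℕ, q < n → q - s (blk q) < s (blk q + 1) - s (blk q) :=
    fun q hq => by
      have h1 := blk_gt q hq
      have h2 := blk_le' q
      omega
  refine Finset.card_bij'
    (fun w _ => fun (j : Fin (r + 1)) (i : Fin (s (j.val + 1) - s j.val)) =>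
      w ⟨s j.val + i.val, hsub1 j i⟩)
    (fun v _ => fun i : Fin n =>
      v ⟨blk i.val, hblt i.val⟩ ⟨i.val - s (blk i.val), hidx i.val i.isLt⟩)
    ?_ ?_ ?_ ?_
  · -- forward membership
    intro w hw
    rw [Finset.mem_filter] at hw
    obtain ⟨hpi, hasc⟩ := hw
    rw [Fintype.mem_piFinset] at hpi
    rw [Fintype.mem_piFinset]
    intro j
    rw [mem_antiSet]
    refine ⟨fun i => hpi _, ?_⟩
    intro i1 i2 hle
    have hl : (i1 : ℕ) ≤ i2 := hle
    have hi2 := i2.isLt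
    have hj := j.isLt
    have hch := chain_le hasc (i2.val - i1.val) (s j.val + i1.val)
      (by have := hsub1 j i2; omega)
      (fun t ht1 ht2 => notinS j.val t (by omega) (by omega) (by omega))
    have e1 : w ⟨s j.val + i1.val + (i2.val - i1.val), by have := hsub1 j i2; omega⟩
        = w ⟨s j.val + i2.val, hsub1 j i2⟩ :=
      congrArg w (Fin.ext (show s j.val + i1.val + (i2.val - i1.val) = s j.val + i2.val
        from by omega))
    exact le_trans (le_of_eq e1.symm) hch
  · -- backward membership
    intro v hv
    rw [Fintype.mem_piFinset] at hv
    rw [Finset.mem_filter]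
    constructor
    · rw [Fintype.mem_piFinset]
      intro i
      exact (mem_antiSet.1 (hv _)).1 _
    · refine (ascSetS_subset_iff _ _).2 ?_
      intro p hp hlt
      have hlt' : v ⟨blk p, hblt p⟩ ⟨p - s (blk p), hidx p (Nat.lt_of_succ_lt hp)⟩
          < v ⟨blk (p + 1), hblt (p + 1)⟩ ⟨p + 1 - s (blk (p + 1)), hidx (p + 1) hp⟩ := hlt
      clear hlt
      have hj_le := blk_le p
      have hsp := blk_le' p
      have hgt := blk_gt p (by omega)
      have hj_le2 := blk_le (p + 1)
      have hsp2 := blk_le' (p + 1)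
      have hgt2 := blk_gt (p + 1) (by omega)
      by_cases hcase : p + 1 < s (blk p + 1)
      · exfalso
        have hbe : blk (p + 1) = blk p := blk_eq (p + 1) (blk p) hj_le (by omega) hcase
        have hanti := (mem_antiSet.1 (hv ⟨blk p, hblt p⟩)).2
        have hmem2 := hanti
          ⟨p - s (blk p), by show p - s (blk p) < s (blk p + 1) - s (blk p); omega⟩
          ⟨p + 1 - s (blk p), by show p + 1 - s (blk p) < s (blk p + 1) - s (blk p); omega⟩
          (by rw [Fin.mk_le_mk]; omega)
        have hseq : s (blk (p + 1)) = s (blk p) := by rw [hbe]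
        have eq1 : v ⟨blk (p + 1), hblt (p + 1)⟩
              ⟨p + 1 - s (blk (p + 1)), hidx (p + 1) hp⟩
            = v ⟨blk p, hblt p⟩ ⟨p + 1 - s (blk p),
                by show p + 1 - s (blk p) < s (blk p + 1) - s (blk p); omega⟩ :=
          depapp_congr v (Fin.ext hbe)
            (show p + 1 - s (blk (p + 1)) = p + 1 - s (blk p) from by omega)
        exact absurd hlt' (not_lt.2 (le_trans (le_of_eq eq1) hmem2))
      · -- p + 1 = s (blk p + 1), a block boundary, belongs to S
        have heq : p + 1 = s (blk p + 1) := by omega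
        have hblkr : blk p < r := by
          by_contra hcon
          have : blk p = r := by omega
          rw [this, hsn] at heq
          omega
        rw [hS, Finset.mem_image]
        exact ⟨blk p + 1, Finset.mem_Icc.2 (by omega), heq.symm⟩
  · -- left inverse
    intro w hw
    funext i
    have h2 : (⟨s (blk i.val) + (i.val - s (blk i.val)), by
        have := blk_le' i.val
        have := blk_gt i.val i.isLt
        have := i.isLt
        omega⟩ : Fin n) = i :=
      Fin.ext (show s (blk i.val) + (i.val - s (blk i.val)) = i.val from by
        have := blk_le' i.val; omega)
    exact congrArg w h2
  · -- right inverse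
    intro v hv
    funext j i
    have hj := j.isLt
    have hi := i.isLt
    have hbe : blk (s j.val + i.val) = j.val :=
      blk_eq _ _ (by omega) (by omega) (by omega)
    exact depapp_congr v (Fin.ext hbe)
      (show s j.val + i.val - s (blk (s j.val + i.val)) = (i : ℕ) from by
        rw [hbe]; omega)
instance decAux (n c : ℕ) (S : Finset ℕ) :
    DecidablePred (fun u : Fin n → ℕ => ascSetS u ⊆ S ∧ ∀ m ∈ Finset.Icc 1 c, ∃ i, u i = m) :=
  fun _ => instDecidableAnd

lemma ascSetS_congr {n : ℕ} {w w' : Fin n → ℕ}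
    (h : ∀ i : Fin (n - 1),
      (w ⟨i.val, by have := i.isLt; omega⟩ < w ⟨i.val + 1, by have := i.isLt; omega⟩ ↔
       w' ⟨i.val, by have := i.isLt; omega⟩ < w' ⟨i.val + 1, by have := i.isLt; omega⟩)) :
    ascSetS w = ascSetS w' := by
  unfold ascSetS
  congr 1
  exact Finset.filter_congr (fun i _ => h i)

lemma card_fiber (n k : ℕ) (S : Finset ℕ) (T : Finset ℕ) (hT : T ⊆ Finset.Icc 1 k) :
    (((Fintype.piFinset fun _ : Fin n => Finset.Icc 1 k).filter
        (fun w => ascSetS w ⊆ S)).filter (fun w => Finset.image w Finset.univ = T)).card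
      = ((Fintype.piFinset fun _ : Fin n => Finset.Icc 1 T.card).filter
          (fun u => ascSetS u ⊆ S ∧ ∀ m ∈ Finset.Icc 1 T.card, ∃ i, u i = m)).card := by
  classical
  set c := T.card with hc_def
  set ρ : ℕ → ℕ := fun x => (T.filter (fun y => y ≤ x)).card with hρ_def
  set e : Fin c ↪o ℕ := T.orderEmbOfFin rfl with he_def
  have he_mem : ∀ i, e i ∈ T := fun i => T.orderEmbOfFin_mem rfl i
  have he_surj : ∀ x ∈ T, ∃ i, e i = x := by
    intro x hx
    have : x ∈ Set.range e := by rw [he_def, Finset.range_orderEmbOfFin]; exact hx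
    exact this
  -- rank of the i-th element is i+1
  have key1 : ∀ i : Fin c, ρ (e i) = i.val + 1 := by
    intro i
    have himg : T.filter (fun y => y ≤ e i) = Finset.image e (Finset.Iic i) := by
      ext y
      simp only [Finset.mem_filter, Finset.mem_image, Finset.mem_Iic]
      constructor
      · rintro ⟨hyT, hyle⟩
        obtain ⟨j, rfl⟩ := he_surj y hyT
        exact ⟨j, by rwa [← e.le_iff_le], rfl⟩
      · rintro ⟨j, hj, rfl⟩
        exact ⟨he_mem j, e.le_iff_le.2 hj⟩
    rw [hρ_def]
    simp only
    rw [himg, Finset.card_image_of_injective _ e.injective, Fin.card_Iic]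
  have key3 : ∀ x ∈ T, 1 ≤ ρ x ∧ ρ x ≤ c := by
    intro x hx
    constructor
    · have h0 : x ∈ T.filter (fun y => y ≤ x) := Finset.mem_filter.2 ⟨hx, le_refl x⟩
      have h1 := Finset.card_pos.2 ⟨x, h0⟩
      show 1 ≤ (T.filter (fun y => y ≤ x)).card
      omega
    · exact Finset.card_le_card (Finset.filter_subset _ _)
  have key4 : ∀ x ∈ T, ∀ y ∈ T, (x < y ↔ ρ x < ρ y) := by
    intro x hx y hy
    constructor
    · intro hxy
      show (T.filter (fun z => z ≤ x)).card < (T.filter (fun z => z ≤ y)).card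
      apply Finset.card_lt_card
      have hsub : T.filter (fun z => z ≤ x) ⊆ T.filter (fun z => z ≤ y) :=
        Finset.monotone_filter_right T (fun z _ hz => le_trans hz hxy.le)
      refine (Finset.ssubset_iff_of_subset hsub).2
        ⟨y, Finset.mem_filter.2 ⟨hy, le_refl y⟩, fun hmem => ?_⟩
      exact absurd (Finset.mem_filter.1 hmem).2 (by omega)
    · intro hρ
      by_contra hc2
      push_neg at hc2
      rcases eq_or_lt_of_le hc2 with rfl | hlt
      · omega
      · have hyx : ρ y < ρ x := by
          show (T.filter (fun z => z ≤ y)).card < (T.filter (fun z => z ≤ x)).card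
          apply Finset.card_lt_card
          have hsub : T.filter (fun z => z ≤ y) ⊆ T.filter (fun z => z ≤ x) :=
            Finset.monotone_filter_right T (fun z _ hz => le_trans hz hlt.le)
          refine (Finset.ssubset_iff_of_subset hsub).2
            ⟨x, Finset.mem_filter.2 ⟨hx, le_refl x⟩, fun hmem => ?_⟩
          exact absurd (Finset.mem_filter.1 hmem).2 (by omega)
        omega
  have key2 : ∀ x ∈ T, ∀ (h : ρ x - 1 < c), e ⟨ρ x - 1, h⟩ = x := by
    intro x hx h
    obtain ⟨i, rfl⟩ := he_surj x hx
    have := key1 i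
    congr 1
    apply Fin.ext
    simp only
    omega
  set e' : ℕ → ℕ := fun m => if h : m - 1 < c then e ⟨m - 1, h⟩ else 0 with he'_def
  refine Finset.card_nbij' (fun w => fun idx => ρ (w idx)) (fun u => fun idx => e' (u idx)) ?_ ?_ ?_ ?_
  · -- forward membership
    intro w hw
    rw [Finset.mem_coe, Finset.mem_filter] at hw
    obtain ⟨hw1, hwim⟩ := hw
    rw [Finset.mem_filter] at hw1
    obtain ⟨hwpi, hwasc⟩ := hw1
    have hwT : ∀ i, w i ∈ T := by
      intro i
      rw [← hwim]
      exact Finset.mem_image.2 ⟨i, Finset.mem_univ _, rfl⟩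
    rw [Finset.mem_coe, Finset.mem_filter]
    refine ⟨?_, ?_, ?_⟩
    · rw [Fintype.mem_piFinset]
      intro i
      have := key3 (w i) (hwT i)
      rw [Finset.mem_Icc]
      exact ⟨this.1, this.2⟩
    · have heq : ascSetS (fun idx => ρ (w idx)) = ascSetS w :=
        ascSetS_congr (fun i => (key4 _ (hwT _) _ (hwT _)).symm)
      show ascSetS (fun idx => ρ (w idx)) ⊆ S
      rw [heq]
      exact hwasc
    · intro m hm
      rw [Finset.mem_Icc] at hm
      obtain ⟨hm1, hm2⟩ := hm
      have hmem : e ⟨m - 1, by omega⟩ ∈ Finset.image w Finset.univ := by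
        rw [hwim]; exact he_mem _
      obtain ⟨i, _, hieq⟩ := Finset.mem_image.1 hmem
      refine ⟨i, ?_⟩
      show ρ (w i) = m
      rw [hieq]
      have h5 : ρ (e ⟨m - 1, by omega⟩) = m := by
        rw [key1]
        show m - 1 + 1 = m
        omega
      exact h5
  · -- backward membership
    intro u hu
    rw [Finset.mem_coe, Finset.mem_filter] at hu
    obtain ⟨hupi, huasc, husurj⟩ := hu
    rw [Fintype.mem_piFinset] at hupi
    have hub : ∀ i, 1 ≤ u i ∧ u i ≤ c := by
      intro i
      have := hupi i
      rw [Finset.mem_Icc] at this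
      exact this
    have he'u : ∀ i, e' (u i) = e ⟨u i - 1, by have := hub i; omega⟩ := by
      intro i
      rw [he'_def]
      simp only
      rw [dif_pos (show u i - 1 < c from by have := hub i; omega)]
    have he'uT : ∀ i, e' (u i) ∈ T := fun i => by rw [he'u i]; exact he_mem _
    rw [Finset.mem_coe, Finset.mem_filter, Finset.mem_filter]
    refine ⟨⟨?_, ?_⟩, ?_⟩
    · rw [Fintype.mem_piFinset]
      intro i
      exact hT (he'uT i)
    · have heq : ascSetS (fun idx => e' (u idx)) = ascSetS u := by
        apply ascSetS_congr
        intro i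
        show e' (u _) < e' (u _) ↔ _
        rw [he'u, he'u, e.lt_iff_lt, Fin.mk_lt_mk]
        have h1 := hub ⟨i.val, by have := i.isLt; omega⟩
        have h2 := hub ⟨i.val + 1, by have := i.isLt; omega⟩
        omega
      show ascSetS (fun idx => e' (u idx)) ⊆ S
      rw [heq]
      exact huasc
    · -- image = T
      apply Finset.Subset.antisymm
      · intro x hx
        obtain ⟨i, _, rfl⟩ := Finset.mem_image.1 hx
        exact he'uT i
      · intro x hx
        obtain ⟨i, rfl⟩ := he_surj x hx
        obtain ⟨idx, hidx⟩ := husurj (i.val + 1)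
          (Finset.mem_Icc.2 ⟨by omega, by have := i.isLt; omega⟩)
        refine Finset.mem_image.2 ⟨idx, Finset.mem_univ _, ?_⟩
        show e' (u idx) = e i
        rw [he'u idx]
        congr 1
        apply Fin.ext
        simp only
        omega
  · -- left inverse
    intro w hw
    rw [Finset.mem_coe, Finset.mem_filter] at hw
    have hwT : ∀ i, w i ∈ T := by
      intro i
      rw [← hw.2]
      exact Finset.mem_image.2 ⟨i, Finset.mem_univ _, rfl⟩
    funext i
    show e' (ρ (w i)) = w i
    have h3 := key3 (w i) (hwT i)
    rw [he'_def]
    simp only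
    rw [dif_pos (by omega)]
    exact key2 (w i) (hwT i) (by omega)
  · -- right inverse
    intro u hu
    rw [Finset.mem_coe, Finset.mem_filter] at hu
    obtain ⟨hupi, _, _⟩ := hu
    rw [Fintype.mem_piFinset] at hupi
    funext i
    show ρ (e' (u i)) = u i
    have hub : 1 ≤ u i ∧ u i ≤ c := by
      have := hupi i
      rwa [Finset.mem_Icc] at this
    rw [he'_def]
    simp only
    rw [dif_pos (by omega), key1]
    show u i - 1 + 1 = u i
    omega
lemma F_eq_sum (n k : ℕ) (S : Finset ℕ) :
    ((Fintype.piFinset fun _ : Fin n => Finset.Icc 1 k).filter (fun w => ascSetS w ⊆ S)).card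
    = ∑ j ∈ Finset.range (k + 1), k.choose j *
       ((Fintype.piFinset fun _ : Fin n => Finset.Icc 1 j).filter
         (fun u => ascSetS u ⊆ S ∧ ∀ m ∈ Finset.Icc 1 j, ∃ i, u i = m)).card := by
  classical
  rw [Finset.card_eq_sum_card_fiberwise
    (f := fun w => Finset.image w Finset.univ)
    (t := (Finset.Icc 1 k).powerset)
    (fun w hw => by
      rw [Finset.mem_coe, Finset.mem_powerset]
      intro x hx
      obtain ⟨i, _, rfl⟩ := Finset.mem_image.1 hx
      rw [Finset.mem_coe, Finset.mem_filter, Fintype.mem_piFinset] at hw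
      exact hw.1 i)]
  rw [Finset.sum_congr rfl
    (fun T hT => card_fiber n k S T (Finset.mem_powerset.1 hT))]
  rw [Finset.sum_powerset_apply_card
    (f := fun j => ((Fintype.piFinset fun _ : Fin n => Finset.Icc 1 j).filter
      (fun u => ascSetS u ⊆ S ∧ ∀ m ∈ Finset.Icc 1 j, ∃ i, u i = m)).card)]
  have hIcc : (Finset.Icc 1 k).card = k := by rw [Nat.card_Icc]; omega
  rw [hIcc]
  exact Finset.sum_congr rfl fun j _ => nsmul_eq_mul _ _

lemma trinom (k i m : ℕ) : k.choose i * (k - i).choose m = k.choose m * (k - m).choose i := by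
  rcases le_or_gt (i + m) k with h | h
  · have hik : i ≤ k := by omega
    have hmk : m ≤ k := by omega
    have hmi : m ≤ k - i := by omega
    have him : i ≤ k - m := by omega
    have h1 := Nat.choose_mul_factorial_mul_factorial hik
    have h2 := Nat.choose_mul_factorial_mul_factorial hmi
    have h3 := Nat.choose_mul_factorial_mul_factorial hmk
    have h4 := Nat.choose_mul_factorial_mul_factorial him
    have hsub : k - i - m = k - m - i := by omega
    have e1 : k.choose i * (k - i).choose m *
        (i.factorial * (m.factorial * (k - i - m).factorial)) = k.factorial := by
      rw [← h1, ← h2]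
      ring
    have e2 : k.choose m * (k - m).choose i *
        (i.factorial * (m.factorial * (k - i - m).factorial)) = k.factorial := by
      rw [← h3, ← h4, hsub]
      ring
    have hpos : 0 < i.factorial * (m.factorial * (k - i - m).factorial) :=
      Nat.mul_pos (Nat.factorial_pos _) (Nat.mul_pos (Nat.factorial_pos _) (Nat.factorial_pos _))
    exact Nat.eq_of_mul_eq_mul_right hpos (e1.trans e2.symm)
  · rcases le_or_gt i k with hik | hik
    · rw [Nat.choose_eq_zero_of_lt (show k - i < m by omega)]
      rcases le_or_gt m k with hmk | hmk
      · rw [Nat.choose_eq_zero_of_lt (show k - m < i by omega)]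
        ring
      · rw [Nat.choose_eq_zero_of_lt hmk]
        ring
    · rw [Nat.choose_eq_zero_of_lt hik,
        Nat.choose_eq_zero_of_lt (show k - m < i by omega)]
      ring

lemma binom_inv (F G : ℕ → ℤ)
    (hFG : ∀ j, F j = ∑ m ∈ Finset.range (j + 1), (j.choose m : ℤ) * G m) (k : ℕ) :
    ∑ i ∈ Finset.range (k + 1), (-1 : ℤ) ^ i * (k.choose i : ℤ) * F (k - i) = G k := by
  have step1 : ∀ i ∈ Finset.range (k + 1),
      (-1 : ℤ) ^ i * (k.choose i : ℤ) * F (k - i)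
        = ∑ m ∈ Finset.range (k + 1),
            (-1 : ℤ) ^ i * (k.choose i : ℤ) * ((k - i).choose m : ℤ) * G m := by
    intro i hi
    rw [hFG (k - i), Finset.mul_sum]
    rw [Finset.sum_subset (Finset.range_subset_range.2 (show k - i + 1 ≤ k + 1 by omega))]
    · exact Finset.sum_congr rfl fun m _ => by ring
    · intro m hm1 hm2
      rw [Finset.mem_range] at hm1 hm2
      rw [Nat.choose_eq_zero_of_lt (show k - i < m by omega)]
      push_cast
      ring
  rw [Finset.sum_congr rfl step1, Finset.sum_comm]
  have step2 : ∀ m ∈ Finset.range (k + 1),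
      (∑ i ∈ Finset.range (k + 1),
        (-1 : ℤ) ^ i * (k.choose i : ℤ) * ((k - i).choose m : ℤ) * G m)
        = ((k.choose m : ℤ) * (if k - m = 0 then 1 else 0)) * G m := by
    intro m hm
    rw [← Finset.sum_mul]
    congr 1
    have e : ∀ i ∈ Finset.range (k + 1),
        (-1 : ℤ) ^ i * (k.choose i : ℤ) * ((k - i).choose m : ℤ)
          = (k.choose m : ℤ) * ((-1 : ℤ) ^ i * ((k - m).choose i : ℤ)) := by
      intro i _
      have ht := trinom k i m
      have ht' : ((k.choose i * (k - i).choose m : ℕ) : ℤ)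
          = ((k.choose m * (k - m).choose i : ℕ) : ℤ) := congrArg (fun x : ℕ => (x : ℤ)) ht
      push_cast at ht'
      calc (-1 : ℤ) ^ i * (k.choose i : ℤ) * ((k - i).choose m : ℤ)
          = (-1 : ℤ) ^ i * ((k.choose i : ℤ) * ((k - i).choose m : ℤ)) := by ring
        _ = (-1 : ℤ) ^ i * ((k.choose m : ℤ) * ((k - m).choose i : ℤ)) := by rw [ht']
        _ = (k.choose m : ℤ) * ((-1 : ℤ) ^ i * ((k - m).choose i : ℤ)) := by ring
    rw [Finset.sum_congr rfl e, ← Finset.mul_sum]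
    congr 1
    rw [← Int.alternating_sum_range_choose (n := k - m)]
    refine (Finset.sum_subset (Finset.range_subset_range.2 (show k - m + 1 ≤ k + 1 by omega)) ?_).symm
    intro i hi1 hi2
    rw [Finset.mem_range] at hi1 hi2
    rw [Nat.choose_eq_zero_of_lt (show k - m < i by omega)]
    push_cast
    ring
  rw [Finset.sum_congr rfl step2]
  rw [Finset.sum_eq_single k]
  · simp
  · intro m hm hne
    rw [Finset.mem_range] at hm
    rw [if_neg (show k - m ≠ 0 by omega)]
    ring
  · intro habs
    exact absurd (Finset.self_mem_range_succ k) habs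
theorem cayley_prescribed_strict_ascent_set (n r : ℕ) (hn : 1 ≤ n) (s : ℕ → ℕ)
    (hs0 : s 0 = 0) (hsn : s (r + 1) = n)
    (hmono : ∀ j ≤ r, s j < s (j + 1)) (S : Finset ℕ)
    (hS : S = (Finset.Icc 1 r).image s) :
    (Set.ncard {w : Fin n → ℕ | IsCayley w ∧ ascSetS w ⊆ S} : ℤ) =
      ∑ k ∈ Finset.range (n + 1), ∑ i ∈ Finset.range (k + 1),
        (-1 : ℤ) ^ i * k.choose i *
          ∏ j ∈ Finset.range (r + 1),
            ((k - i) + (s (j + 1) - s j) - 1).choose (s (j + 1) - s j) := by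
  classical
  have hset : {w : Fin n → ℕ | IsCayley w ∧ ascSetS w ⊆ S}
      = ↑((Finset.range (n + 1)).biUnion (fun j =>
          (Fintype.piFinset fun _ : Fin n => Finset.Icc 1 j).filter
            (fun u => ascSetS u ⊆ S ∧ ∀ m ∈ Finset.Icc 1 j, ∃ i, u i = m))) := by
    ext w
    simp only [Set.mem_setOf_eq, Finset.coe_biUnion, Set.mem_iUnion, Finset.mem_coe]
    constructor
    · rintro ⟨⟨k', hk', hrange⟩, hasc⟩
      refine ⟨k', Finset.mem_range.2 (by omega), ?_⟩
      rw [Finset.mem_filter, Fintype.mem_piFinset]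
      refine ⟨fun i => ?_, hasc, fun m hm => ?_⟩
      · have h1 : w i ∈ Set.Icc 1 k' := by rw [← hrange]; exact ⟨i, rfl⟩
        rw [Finset.mem_Icc]
        exact ⟨h1.1, h1.2⟩
      · rw [Finset.mem_Icc] at hm
        have h1 : m ∈ Set.Icc 1 k' := ⟨hm.1, hm.2⟩
        rw [← hrange] at h1
        exact h1
    · rintro ⟨j, hj, hmem⟩
      rw [Finset.mem_filter, Fintype.mem_piFinset] at hmem
      obtain ⟨hbound, hasc, hsurj⟩ := hmem
      refine ⟨⟨j, by rw [Finset.mem_range] at hj; omega, ?_⟩, hasc⟩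
      ext x
      simp only [Set.mem_range, Set.mem_Icc]
      constructor
      · rintro ⟨i, rfl⟩
        have := hbound i
        rw [Finset.mem_Icc] at this
        exact this
      · intro hx
        exact hsurj x (Finset.mem_Icc.2 hx)
  have hdisj : ∀ j1 ∈ Finset.range (n + 1), ∀ j2 ∈ Finset.range (n + 1), j1 ≠ j2 →
      Disjoint ((Fintype.piFinset fun _ : Fin n => Finset.Icc 1 j1).filter
            (fun u => ascSetS u ⊆ S ∧ ∀ m ∈ Finset.Icc 1 j1, ∃ i, u i = m))
        ((Fintype.piFinset fun _ : Fin n => Finset.Icc 1 j2).filter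
            (fun u => ascSetS u ⊆ S ∧ ∀ m ∈ Finset.Icc 1 j2, ∃ i, u i = m)) := by
    intro j1 h1 j2 h2 hne
    rw [Finset.disjoint_left]
    intro w hw1 hw2
    rw [Finset.mem_filter, Fintype.mem_piFinset] at hw1 hw2
    have hj1 : 1 ≤ j1 := by
      have := hw1.1 ⟨0, by omega⟩
      rw [Finset.mem_Icc] at this
      omega
    have hj2 : 1 ≤ j2 := by
      have := hw2.1 ⟨0, by omega⟩
      rw [Finset.mem_Icc] at this
      omega
    obtain ⟨i1, hi1⟩ := hw1.2.2 j1 (Finset.mem_Icc.2 (by omega))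
    obtain ⟨i2, hi2⟩ := hw2.2.2 j2 (Finset.mem_Icc.2 (by omega))
    have hb1 := hw2.1 i1
    have hb2 := hw1.1 i2
    rw [Finset.mem_Icc] at hb1 hb2
    exact hne (by omega)
  rw [hset, Set.ncard_coe_finset, Finset.card_biUnion hdisj]
  have hFG : ∀ jj : ℕ, (((Fintype.piFinset fun _ : Fin n => Finset.Icc 1 jj).filter
        (fun w => ascSetS w ⊆ S)).card : ℤ)
      = ∑ m ∈ Finset.range (jj + 1), (jj.choose m : ℤ) *
          (((Fintype.piFinset fun _ : Fin n => Finset.Icc 1 m).filter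
            (fun u => ascSetS u ⊆ S ∧ ∀ mm ∈ Finset.Icc 1 m, ∃ i, u i = mm)).card : ℤ) := by
    intro jj
    have := F_eq_sum n jj S
    exact_mod_cast this
  push_cast
  refine Finset.sum_congr rfl fun k hk => ?_
  have hinv := binom_inv
    (fun m => (((Fintype.piFinset fun _ : Fin n => Finset.Icc 1 m).filter
        (fun w => ascSetS w ⊆ S)).card : ℤ))
    (fun m => (((Fintype.piFinset fun _ : Fin n => Finset.Icc 1 m).filter
        (fun u => ascSetS u ⊆ S ∧ ∀ mm ∈ Finset.Icc 1 m, ∃ i, u i = mm)).card : ℤ))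
    hFG k
  rw [← hinv]
  refine Finset.sum_congr rfl fun i hi => ?_
  rw [card_block n r (k - i) hn s hs0 hsn hmono S hS]
  push_cast
  ring
end

section
/- For all n ≥ 0, the weak two-sided Caylerian polynomial satisfies n! · B̂_n(s,t) = Σ_{k=0}^{n} c(n,k) · Bal^s(k) · Bal^t(k), as an identity of polynomials in s and t, where Bal^t(k) = Σ_{w ∈ Bal[k]} t^{blocks(w)} records the distribution of the number of blocks over ballots of [k]. -/
open Finset
section Orb

variable {n : ℕ}

abbrev OrbQ (σ : Equiv.Perm (Fin n)) : Type := Quotient (Equiv.Perm.SameCycle.setoid σ)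

noncomputable instance (σ : Equiv.Perm (Fin n)) : Fintype (OrbQ σ) := by
  classical exact Quotient.fintype _

variable (σ : Equiv.Perm (Fin n))

def orbLabel (x : Fin n) : {x : Fin n // σ x = x} ⊕ {c // c ∈ σ.cycleFactorsFinset} :=
  if h : σ x = x then Sum.inl ⟨x, h⟩ else
    Sum.inr ⟨σ.cycleOf x, Equiv.Perm.cycleOf_mem_cycleFactorsFinset_iff.2 (by
      simpa [Equiv.Perm.mem_support] using h)⟩

lemma orbLabel_sound {x y : Fin n} (hxy : σ.SameCycle x y) : orbLabel σ x = orbLabel σ y := by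
  by_cases hx : σ x = x
  · have : y = x := by
      obtain ⟨i, hi⟩ := hxy
      rw [← hi, Equiv.Perm.zpow_apply_eq_self_of_apply_eq_self hx]
    subst this; rfl
  · have hy : ¬ σ y = y := by
      intro hy
      obtain ⟨i, hi⟩ := hxy.symm
      rw [Equiv.Perm.zpow_apply_eq_self_of_apply_eq_self hy] at hi
      exact hx (hi ▸ hy)
    rw [orbLabel, orbLabel, dif_neg hx, dif_neg hy]
    exact congrArg _ (Subtype.ext hxy.cycleOf_eq)

noncomputable def orbEquiv : OrbQ σ ≃ ({x : Fin n // σ x = x} ⊕ {c // c ∈ σ.cycleFactorsFinset}) := by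
  classical
  refine Equiv.ofBijective (Quotient.lift (orbLabel σ) fun x y h => orbLabel_sound σ h) ⟨?_, ?_⟩
  · rintro ⟨x⟩ ⟨y⟩ h
    replace h : orbLabel σ x = orbLabel σ y := h
    by_cases hx : σ x = x <;> by_cases hy : σ y = y <;>
      rw [orbLabel, orbLabel] at h
    · rw [dif_pos hx, dif_pos hy] at h
      cases h; rfl
    · rw [dif_pos hx, dif_neg hy] at h; exact absurd h (by simp)
    · rw [dif_neg hx, dif_pos hy] at h; exact absurd h (by simp)
    · rw [dif_neg hx, dif_neg hy] at h
      apply Quotient.sound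
      have hcyc : σ.cycleOf x = σ.cycleOf y := by
        simpa using congrArg Subtype.val (Sum.inr.inj h)
      have : y ∈ (σ.cycleOf x).support := by
        rw [hcyc, Equiv.Perm.mem_support_cycleOf_iff]
        exact ⟨Equiv.Perm.SameCycle.refl _ _, Equiv.Perm.mem_support.2 hy⟩
      exact (Equiv.Perm.mem_support_cycleOf_iff.1 this).1
  · rintro (⟨x, hx⟩ | ⟨c, hc⟩)
    · exact ⟨⟦x⟧, by simp [orbLabel, hx]⟩
    · have hc' := Equiv.Perm.mem_cycleFactorsFinset_iff.1 hc
      obtain ⟨x, hx⟩ := hc'.1.nonempty_support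
      have hceq : c = σ.cycleOf x := Equiv.Perm.cycle_is_cycleOf hx hc
      have hxσ : ¬ σ x = x := by
        have : x ∈ σ.support := Equiv.Perm.mem_cycleFactorsFinset_support_le hc hx
        exact Equiv.Perm.mem_support.1 this
      exact ⟨⟦x⟧, by simp [orbLabel, dif_neg hxσ, ← hceq]⟩

lemma card_orbQ : Fintype.card (OrbQ σ) = (n - σ.support.card) + Multiset.card σ.cycleType := by
  classical
  rw [Fintype.card_congr (orbEquiv σ), Fintype.card_sum]
  congr 1
  · rw [Fintype.card_subtype]
    have : Finset.filter (fun x => σ x = x) Finset.univ = σ.supportᶜ := by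
      ext x; simp [Equiv.Perm.mem_support]
    rw [this, Finset.card_compl, Fintype.card_fin]
  · rw [Fintype.card_coe, Equiv.Perm.cycleType_def, Multiset.card_map]
    rfl

end Orb
section Inv

noncomputable def Sur (k r : ℕ) : ℕ := Fintype.card {f : Fin k → Fin r // Function.Surjective f}

def surjCongr {α β γ δ : Type*} (e : α ≃ β) (e' : γ ≃ δ) :
    {f : α → γ // Function.Surjective f} ≃ {f : β → δ // Function.Surjective f} where
  toFun f := ⟨e' ∘ f.1 ∘ e.symm, e'.surjective.comp (f.2.comp e.symm.surjective)⟩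
  invFun f := ⟨e'.symm ∘ f.1 ∘ e, e'.symm.surjective.comp (f.2.comp e.surjective)⟩
  left_inv f := by ext x; simp
  right_inv f := by ext x; simp

variable {n : ℕ} (σ : Equiv.Perm (Fin n))


lemma invariant_const_on_cycles {r : ℕ} {f : Fin n → Fin r} (hf : f ∘ σ = f)
    {x y : Fin n} (h : σ.SameCycle x y) : f x = f y := by
  have key : ∀ i : ℤ, f ((σ ^ i) x) = f x := by
    intro i
    induction i using Int.induction_on with
    | zero => simp
    | succ i ih =>
      rw [add_comm, zpow_add, zpow_one, Equiv.Perm.mul_apply,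
        show f (σ ((σ ^ (i : ℤ)) x)) = f ((σ ^ (i : ℤ)) x) from congrFun hf _]
      exact ih
    | pred i ih =>
      rw [sub_eq_add_neg, add_comm, zpow_add, Equiv.Perm.mul_apply, zpow_neg_one]
      have : f (σ (σ⁻¹ ((σ ^ (-i : ℤ)) x))) = f (σ⁻¹ ((σ ^ (-i : ℤ)) x)) := congrFun hf _
      rw [← Equiv.Perm.mul_apply σ σ⁻¹, mul_inv_cancel, Equiv.Perm.one_apply] at this
      rw [← this]
      exact ih
  obtain ⟨i, hi⟩ := h
  rw [← hi, key]

noncomputable def invSurjEquiv (r : ℕ) :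
    {f : Fin n → Fin r // f ∘ σ = f ∧ Function.Surjective f} ≃
      {F : OrbQ σ → Fin r // Function.Surjective F} where
  toFun f := ⟨Quotient.lift f.1 (fun _ _ h => invariant_const_on_cycles σ f.2.1 h),
    fun y => by obtain ⟨x, hx⟩ := f.2.2 y; exact ⟨⟦x⟧, hx⟩⟩
  invFun F := ⟨F.1 ∘ Quotient.mk _, by
    constructor
    · funext x
      exact congrArg F.1 (Quotient.sound (Equiv.Perm.sameCycle_apply_left.2
        (Equiv.Perm.SameCycle.refl σ x)))
    · exact F.2.comp Quotient.mk_surjective⟩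
  left_inv f := by ext x; rfl
  right_inv F := by
    ext q
    induction q using Quotient.inductionOn with
    | h x => rfl

lemma card_inv_surj (r : ℕ) :
    Fintype.card {f : Fin n → Fin r // f ∘ σ = f ∧ Function.Surjective f} =
      Sur (Fintype.card (OrbQ σ)) r := by
  rw [Fintype.card_congr ((invSurjEquiv σ r).trans (surjCongr (Fintype.equivFin (OrbQ σ)) (Equiv.refl _)))]
  rfl

end Inv
section Bal


def BalSet (k : ℕ) : Set (List (Finset (Fin k))) :=
  {L | (∀ B ∈ L, B.Nonempty) ∧ L.Pairwise Disjoint ∧ ∀ x, ∃ B ∈ L, x ∈ B}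

variable {k : ℕ}

def ballotIdx (L : List (Finset (Fin k))) (x : Fin k) : ℕ := L.findIdx (fun B => x ∈ B)

lemma ballotIdx_lt {L : List (Finset (Fin k))} (hL : L ∈ BalSet k) (x : Fin k) :
    ballotIdx L x < L.length := by
  apply List.findIdx_lt_length_of_exists
  obtain ⟨B, hB, hx⟩ := hL.2.2 x
  exact ⟨B, hB, by simpa using hx⟩

lemma mem_ballotIdx {L : List (Finset (Fin k))} (hL : L ∈ BalSet k) (x : Fin k) :
    x ∈ L[ballotIdx L x]'(ballotIdx_lt hL x) := by
  have := List.findIdx_getElem (p := fun B => decide (x ∈ B)) (xs := L) (w := ballotIdx_lt hL x)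
  simp only [decide_eq_true_eq] at this
  simp only [ballotIdx]
  convert this using 2
  rfl

lemma ballotIdx_unique {L : List (Finset (Fin k))} (hL : L ∈ BalSet k) {x : Fin k} {i : ℕ}
    (hi : i < L.length) (hx : x ∈ L[i]) : i = ballotIdx L x := by
  by_contra hne
  have hdisj := List.pairwise_iff_getElem.1 hL.2.1
  have hmem := mem_ballotIdx hL x
  rcases lt_or_gt_of_ne hne with h | h
  · simpa using (hdisj i (ballotIdx L x) hi (ballotIdx_lt hL x) h).le_bot
      (Finset.mem_inter.2 ⟨hx, hmem⟩)
  · simpa using (hdisj (ballotIdx L x) i (ballotIdx_lt hL x) hi h).le_bot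
      (Finset.mem_inter.2 ⟨hmem, hx⟩)

lemma balSet_length_le {L : List (Finset (Fin k))} (hL : L ∈ BalSet k) : L.length ≤ k := by
  classical
  have hne : ∀ i : Fin L.length, (L[(i : ℕ)]'i.isLt).Nonempty := by
    intro i
    exact hL.1 (L[(i : ℕ)]'i.isLt) (List.getElem_mem i.isLt)
  let c : Fin L.length → Fin k := fun i => (hne i).choose
  have hc : ∀ i : Fin L.length, c i ∈ L[(i : ℕ)]'i.isLt := fun i => (hne i).choose_spec
  have hinj : Function.Injective c := by
    intro i j hij
    have h1 := ballotIdx_unique hL i.isLt (hc i)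
    have h2 := ballotIdx_unique hL j.isLt (hij ▸ hc j)
    exact Fin.ext (h1.trans h2.symm)
  simpa using Fintype.card_le_of_injective c hinj

lemma balSet_finite (k : ℕ) : (BalSet k).Finite :=
  (List.finite_length_le (Finset (Fin k)) k).subset fun _ hL => balSet_length_le hL

noncomputable def ballotEquiv (k r : ℕ) :
    {L : List (Finset (Fin k)) // L ∈ BalSet k ∧ L.length = r} ≃
      {f : Fin k → Fin r // Function.Surjective f} where
  toFun L := ⟨fun x => ⟨ballotIdx L.1 x, by have := ballotIdx_lt L.2.1 x; omega⟩, by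
    intro i
    have hi : (i : ℕ) < L.1.length := L.2.2.symm ▸ i.isLt
    obtain ⟨x, hx⟩ := L.2.1.1 _ (List.getElem_mem hi)
    exact ⟨x, Fin.ext (ballotIdx_unique L.2.1 hi hx).symm⟩⟩
  invFun f := ⟨List.ofFn (fun i : Fin r => Finset.univ.filter (fun x => f.1 x = i)), by
    refine ⟨⟨?_, ?_, ?_⟩, by simp⟩
    · intro B hB
      obtain ⟨i, rfl⟩ := List.mem_ofFn.1 hB
      obtain ⟨x, hx⟩ := f.2 i
      exact ⟨x, by simp [hx]⟩
    · rw [List.pairwise_iff_getElem]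
      intro i j hi hj hij
      rw [List.getElem_ofFn, List.getElem_ofFn]
      rw [Finset.disjoint_left]
      intro x hx1 hx2
      simp only [Finset.mem_filter] at hx1 hx2
      have := hx1.2.symm.trans hx2.2
      simp only [Fin.mk.injEq] at this
      omega
    · intro x
      refine ⟨_, List.getElem_mem (by simpa using (f.1 x).isLt :
        ((f.1 x : ℕ) < (List.ofFn (fun i : Fin r => Finset.univ.filter (fun y => f.1 y = i))).length)), ?_⟩
      rw [List.getElem_ofFn]
      simp⟩
  left_inv := by
    rintro ⟨L, hL, rfl⟩
    apply Subtype.ext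
    apply List.ext_getElem (by simp)
    intro i h1 h2
    rw [List.getElem_ofFn]
    ext x
    simp only [Finset.mem_filter, Finset.mem_univ, true_and, Fin.mk.injEq]
    constructor
    · rintro h
      have : (i : ℕ) = ballotIdx L x → x ∈ L[i] := fun hh => by
        have := mem_ballotIdx hL x
        simp_rw [← hh] at this
        exact this
      exact this h.symm
    · intro hx
      exact (ballotIdx_unique hL h2 hx).symm
  right_inv := by
    rintro ⟨f, hf⟩
    apply Subtype.ext
    funext x
    apply Fin.ext
    simp only
    refine (ballotIdx_unique ?_ ?_ ?_).symm
    · refine ⟨?_, ?_, ?_⟩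
      · intro B hB
        obtain ⟨i, rfl⟩ := List.mem_ofFn.1 hB
        obtain ⟨y, hy⟩ := hf i
        exact ⟨y, by simp [hy]⟩
      · rw [List.pairwise_iff_getElem]
        intro i j hi hj hij
        rw [List.getElem_ofFn, List.getElem_ofFn, Finset.disjoint_left]
        intro y hy1 hy2
        simp only [Finset.mem_filter] at hy1 hy2
        have := hy1.2.symm.trans hy2.2
        simp only [Fin.mk.injEq] at this
        omega
      · intro y
        refine ⟨_, List.getElem_mem (by simpa using (f y).isLt :
          ((f y : ℕ) < (List.ofFn (fun i : Fin r => Finset.univ.filter (fun z => f z = i))).length)), ?_⟩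
        rw [List.getElem_ofFn]
        simp
    · simpa using (f x).isLt
    · rw [List.getElem_ofFn]
      simp

lemma balPoly_card (k r : ℕ) :
    ((balSet_finite k).toFinset.filter (fun L => L.length = r)).card = Sur k r := by
  classical
  rw [← Fintype.card_coe]
  refine Fintype.card_congr ((Equiv.subtypeEquivRight ?_).trans (ballotEquiv k r))
  intro L
  simp [Set.Finite.mem_toFinset]

noncomputable def BalPoly (k : ℕ) (t : ℚ) : ℚ :=
  ∑ᶠ L ∈ {L : List (Finset (Fin k)) |
      (∀ B ∈ L, B.Nonempty) ∧ L.Pairwise Disjoint ∧ ∀ x, ∃ B ∈ L, x ∈ B},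
    t ^ L.length

lemma balPoly_eq (k : ℕ) (t : ℚ) :
    BalPoly k t = ∑ r ∈ Finset.range (k + 1), (Sur k r : ℚ) * t ^ r := by
  classical
  have h1 : BalPoly k t = ∑ L ∈ (balSet_finite k).toFinset, t ^ L.length := by
    rw [BalPoly]
    exact finsum_mem_eq_finite_toFinset_sum _ (balSet_finite k)
  rw [h1, ← Finset.sum_fiberwise_of_maps_to (g := List.length)
    (fun L hL => Finset.mem_range.2 (Nat.lt_succ_of_le
      (balSet_length_le ((balSet_finite k).mem_toFinset.1 hL))))]
  refine Finset.sum_congr rfl fun r _ => ?_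
  have : ∀ L ∈ (balSet_finite k).toFinset.filter (fun L => L.length = r),
      t ^ L.length = t ^ r := fun L hL => by rw [(Finset.mem_filter.1 hL).2]
  rw [Finset.sum_congr rfl this, Finset.sum_const, balPoly_card, nsmul_eq_mul]

end Bal
section Burge

-- Chunk 5: Burge side
def BM (n r c : ℕ) : Set (Matrix (Fin r) (Fin c) ℕ) :=
  {M | (∑ i, ∑ j, M i j) = n ∧ (∀ i, ∃ j, 0 < M i j) ∧ (∀ j, ∃ i, 0 < M i j)}

lemma bm_finite (n r c : ℕ) : (BM n r c).Finite := by
  classical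
  have : BM n r c ⊆ Set.pi Set.univ (fun _ : Fin r => Set.pi Set.univ (fun _ : Fin c => Set.Iic n)) := by
    intro M hM i _ j _
    simp only [Set.mem_Iic]
    calc M i j ≤ ∑ j', M i j' := Finset.single_le_sum (fun _ _ => Nat.zero_le _) (mem_univ j)
      _ ≤ ∑ i', ∑ j', M i' j' := Finset.single_le_sum (f := fun i' => ∑ j', M i' j')
          (fun _ _ => Nat.zero_le _) (mem_univ i)
      _ = n := hM.1
  exact Set.Finite.subset (Set.Finite.pi (fun _ => Set.Finite.pi (fun _ => Set.finite_Iic n))) this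

noncomputable def Nburge (n r c : ℕ) : ℕ := (bm_finite n r c).toFinset.card

def BurgeSet (n : ℕ) : Set (Σ r : ℕ, Σ k : ℕ, Matrix (Fin r) (Fin k) ℕ) :=
  {p | (∑ i, ∑ j, p.2.2 i j) = n ∧ (∀ i, ∃ j, 0 < p.2.2 i j) ∧ ∀ j, ∃ i, 0 < p.2.2 i j}

lemma burge_r_le {n : ℕ} {p : Σ r : ℕ, Σ k : ℕ, Matrix (Fin r) (Fin k) ℕ}
    (hp : p ∈ BurgeSet n) : p.1 ≤ n := by
  have : ∀ i : Fin p.1, 1 ≤ ∑ j, p.2.2 i j := by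
    intro i
    obtain ⟨j, hj⟩ := hp.2.1 i
    calc 1 ≤ p.2.2 i j := hj
      _ ≤ ∑ j', p.2.2 i j' := Finset.single_le_sum (fun _ _ => Nat.zero_le _) (mem_univ j)
  calc p.1 = ∑ _i : Fin p.1, 1 := by simp
    _ ≤ ∑ i, ∑ j, p.2.2 i j := Finset.sum_le_sum fun i _ => this i
    _ = n := hp.1

lemma burge_c_le {n : ℕ} {p : Σ r : ℕ, Σ k : ℕ, Matrix (Fin r) (Fin k) ℕ}
    (hp : p ∈ BurgeSet n) : p.2.1 ≤ n := by
  have hsum : (∑ j, ∑ i, p.2.2 i j) = n := by rw [Finset.sum_comm]; exact hp.1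
  have : ∀ j : Fin p.2.1, 1 ≤ ∑ i, p.2.2 i j := by
    intro j
    obtain ⟨i, hi⟩ := hp.2.2 j
    calc 1 ≤ p.2.2 i j := hi
      _ ≤ ∑ i', p.2.2 i' j := Finset.single_le_sum (f := fun i' => p.2.2 i' j)
          (fun _ _ => Nat.zero_le _) (mem_univ i)
  calc p.2.1 = ∑ _j : Fin p.2.1, 1 := by simp
    _ ≤ ∑ j, ∑ i, p.2.2 i j := Finset.sum_le_sum fun j _ => this j
    _ = n := hsum

lemma burge_finite (n : ℕ) : (BurgeSet n).Finite := by
  classical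
  have hsub : BurgeSet n ⊆ ⋃ r ∈ Set.Iic n, ⋃ c ∈ Set.Iic n,
      (fun M => (⟨r, c, M⟩ : Σ r : ℕ, Σ k : ℕ, Matrix (Fin r) (Fin k) ℕ)) '' (BM n r c) := by
    rintro ⟨r, c, M⟩ hp
    simp only [Set.mem_iUnion]
    exact ⟨r, burge_r_le hp, c, burge_c_le hp, M, ⟨hp.1, hp.2.1, hp.2.2⟩, rfl⟩
  exact Set.Finite.subset (Set.Finite.biUnion (Set.finite_Iic n) fun r _ =>
    Set.Finite.biUnion (Set.finite_Iic n) fun c _ => (bm_finite n r c).image _) hsub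

lemma burge_fiber_card (n r c : ℕ) :
    ((burge_finite n).toFinset.filter (fun p => (p.1, p.2.1) = (r, c))).card = Nburge n r c := by
  classical
  rw [Nburge]
  refine (Finset.card_nbij (fun M => ⟨r, c, M⟩) ?_ ?_ ?_).symm
  · intro M hM
    rw [Finset.mem_coe, Set.Finite.mem_toFinset] at hM
    rw [Finset.mem_coe, Finset.mem_filter, Set.Finite.mem_toFinset]
    exact ⟨⟨hM.1, hM.2.1, hM.2.2⟩, rfl⟩
  · intro M1 _ M2 _ h
    simpa using h
  · rintro ⟨r', c', M⟩ hp
    simp only [Finset.coe_filter, Set.Finite.mem_toFinset, Set.mem_setOf_eq, Prod.mk.injEq] at hp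
    obtain ⟨hmem, h1, h2⟩ := hp
    subst h1; subst h2
    exact ⟨M, by rw [Set.Finite.coe_toFinset]; exact ⟨hmem.1, hmem.2.1, hmem.2.2⟩, rfl⟩

noncomputable def BhatPoly (n : ℕ) (s t : ℚ) : ℚ :=
  ∑ᶠ p ∈ {p : Σ r : ℕ, Σ k : ℕ, Matrix (Fin r) (Fin k) ℕ |
      (∑ i, ∑ j, p.2.2 i j) = n ∧ (∀ i, ∃ j, 0 < p.2.2 i j) ∧ ∀ j, ∃ i, 0 < p.2.2 i j},
    s ^ p.1 * t ^ p.2.1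

lemma bhatPoly_eq (n : ℕ) (s t : ℚ) :
    BhatPoly n s t = ∑ q ∈ Finset.range (n+1) ×ˢ Finset.range (n+1),
      (Nburge n q.1 q.2 : ℚ) * (s ^ q.1 * t ^ q.2) := by
  classical
  have h1 : BhatPoly n s t = ∑ p ∈ (burge_finite n).toFinset, s ^ p.1 * t ^ p.2.1 := by
    rw [BhatPoly]
    exact finsum_mem_eq_finite_toFinset_sum _ (burge_finite n)
  rw [h1, ← Finset.sum_fiberwise_of_maps_to (g := fun p => (p.1, p.2.1))
    (fun p hp => Finset.mem_product.2 ⟨Finset.mem_range.2 (Nat.lt_succ_of_le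
      (burge_r_le ((burge_finite n).mem_toFinset.1 hp))),
      Finset.mem_range.2 (Nat.lt_succ_of_le (burge_c_le ((burge_finite n).mem_toFinset.1 hp)))⟩)]
  refine Finset.sum_congr rfl fun q _ => ?_
  have : ∀ p ∈ (burge_finite n).toFinset.filter (fun p => (p.1, p.2.1) = q),
      s ^ p.1 * t ^ p.2.1 = s ^ q.1 * t ^ q.2 := by
    intro p hp
    have h := (Finset.mem_filter.1 hp).2
    rw [Prod.ext_iff] at h
    simp only at h
    exact congrArg₂ (· * ·) (congrArg (s ^ ·) h.1) (congrArg (t ^ ·) h.2)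
  rw [Finset.sum_congr rfl this, Finset.sum_const, nsmul_eq_mul]
  congr 1
  have := burge_fiber_card n q.1 q.2
  rw [← this]

end Burge
section Fib

section Mu
variable {n r c : ℕ} (m : Fin r × Fin c → ℕ)

/-- canonical placement map -/
noncomputable def muMap (C : Fin n → Fin r × Fin c)
    (hC : ∀ p, (univ.filter (fun a => C a = p)).card = m p) :
    (Σ p : Fin r × Fin c, Fin (m p)) → Fin n := fun z =>
  ((univ.filter (fun a => C a = z.1)).orderIsoOfFin (hC z.1) z.2 : Fin n)

variable (C : Fin n → Fin r × Fin c) (hC : ∀ p, (univ.filter (fun a => C a = p)).card = m p)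

lemma muMap_spec (z : Σ p : Fin r × Fin c, Fin (m p)) : C (muMap m C hC z) = z.1 := by
  have := ((univ.filter (fun a => C a = z.1)).orderIsoOfFin (hC z.1) z.2).2
  exact (Finset.mem_filter.1 this).2

lemma muMap_bijective : Function.Bijective (muMap m C hC) := by
  constructor
  · rintro ⟨p, a⟩ ⟨q, b⟩ h
    have hpq : p = q := by
      have h1 := muMap_spec m C hC ⟨p, a⟩
      have h2 := muMap_spec m C hC ⟨q, b⟩
      simp only at h1 h2
      rw [← h1, ← h2, h]
    subst hpq
    have : a = b := by
      have := Subtype.ext (p := fun x => x ∈ univ.filter (fun a => C a = p)) h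
      exact ((univ.filter (fun a => C a = p)).orderIsoOfFin (hC p)).injective this
    rw [this]
  · intro x
    have hx : x ∈ univ.filter (fun a => C a = C x) := by simp
    refine ⟨⟨C x, ((univ.filter (fun a => C a = C x)).orderIsoOfFin (hC (C x))).symm ⟨x, hx⟩, ⟩, ?_⟩
    simp [muMap]

lemma muMap_congr (C' : Fin n → Fin r × Fin c)
    (hC' : ∀ p, (univ.filter (fun a => C' a = p)).card = m p) (h : C = C')
    (z : Σ p : Fin r × Fin c, Fin (m p)) : muMap m C hC z = muMap m C' hC' z := by
  subst h; rfl

end Mu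

section Fiber
variable {n r c : ℕ}

def TTprop (x : Equiv.Perm (Fin n) × (Fin n → Fin r) × (Fin n → Fin c)) : Prop :=
  x.2.1 ∘ x.1 = x.2.1 ∧ x.2.2 ∘ x.1 = x.2.2 ∧
    Function.Surjective x.2.1 ∧ Function.Surjective x.2.2

def chiMat (x : Equiv.Perm (Fin n) × (Fin n → Fin r) × (Fin n → Fin c)) :
    Matrix (Fin r) (Fin c) ℕ := fun i j =>
  (univ.filter (fun a => x.2.1 a = i ∧ x.2.2 a = j)).card

variable (A : Matrix (Fin r) (Fin c) ℕ)

/-- cells of an equiv -/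
def Cof (h : (Σ p : Fin r × Fin c, Fin (A p.1 p.2)) ≃ Fin n) : Fin n → Fin r × Fin c :=
  fun x => (h.symm x).1

lemma cof_apply (h : (Σ p : Fin r × Fin c, Fin (A p.1 p.2)) ≃ Fin n)
    (z : Σ p : Fin r × Fin c, Fin (A p.1 p.2)) : Cof A h (h z) = z.1 := by
  simp [Cof]

lemma fiberCard (h : (Σ p : Fin r × Fin c, Fin (A p.1 p.2)) ≃ Fin n) (p : Fin r × Fin c) :
    (univ.filter (fun a => Cof A h a = p)).card = A p.1 p.2 := by
  classical
  have himg : univ.filter (fun a => Cof A h a = p) =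
      Finset.image (fun a : Fin (A p.1 p.2) => h ⟨p, a⟩) univ := by
    ext x
    simp only [Finset.mem_filter, Finset.mem_univ, true_and, Finset.mem_image]
    constructor
    · intro hx
      rcases hq : h.symm x with ⟨p', b⟩
      have hp' : p' = p := by
        rw [Cof, hq] at hx
        exact hx
      subst hp'
      exact ⟨b, by rw [← hq, Equiv.apply_symm_apply]⟩
    · rintro ⟨a, rfl⟩
      exact cof_apply A h ⟨p, a⟩
  rw [himg, Finset.card_image_of_injective (f := fun a : Fin (A p.1 p.2) => h ⟨p, a⟩) _
    (fun a b hab => by simpa using sigma_mk_injective (h.injective hab))]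
  simp

noncomputable def muEq (C : Fin n → Fin r × Fin c)
    (hC : ∀ p, (univ.filter (fun a => C a = p)).card = A p.1 p.2) :
    (Σ p : Fin r × Fin c, Fin (A p.1 p.2)) ≃ Fin n :=
  Equiv.ofBijective (muMap (fun p => A p.1 p.2) C hC)
    (muMap_bijective (fun p => A p.1 p.2) C hC)

lemma muEq_spec (C : Fin n → Fin r × Fin c)
    (hC : ∀ p, (univ.filter (fun a => C a = p)).card = A p.1 p.2)
    (z : Σ p : Fin r × Fin c, Fin (A p.1 p.2)) : C (muEq A C hC z) = z.1 :=
  muMap_spec _ C hC z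

lemma muEq_symm_fst (C : Fin n → Fin r × Fin c)
    (hC : ∀ p, (univ.filter (fun a => C a = p)).card = A p.1 p.2)
    (x : Fin n) : ((muEq A C hC).symm x).1 = C x := by
  conv_rhs => rw [← (muEq A C hC).apply_symm_apply x]
  exact (muEq_spec A C hC ((muEq A C hC).symm x)).symm

lemma muEq_congr (C C' : Fin n → Fin r × Fin c)
    (hC : ∀ p, (univ.filter (fun a => C a = p)).card = A p.1 p.2)
    (hC' : ∀ p, (univ.filter (fun a => C' a = p)).card = A p.1 p.2)
    (h : C = C') : muEq A C hC = muEq A C' hC' := by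
  apply Equiv.ext
  intro z
  exact muMap_congr _ C hC C' hC' h z

noncomputable def sigmaOf (h : (Σ p : Fin r × Fin c, Fin (A p.1 p.2)) ≃ Fin n) :
    Equiv.Perm (Fin n) :=
  (muEq A (Cof A h) (fiberCard A h)).symm.trans h

lemma cof_sigmaOf (h : (Σ p : Fin r × Fin c, Fin (A p.1 p.2)) ≃ Fin n) (x : Fin n) :
    Cof A h (sigmaOf A h x) = Cof A h x := by
  rw [sigmaOf, Equiv.trans_apply, cof_apply, muEq_symm_fst]


variable (hA : A ∈ BM n r c)
variable (φ : (Σ p : Fin r × Fin c, Fin (A p.1 p.2)) ≃ Fin n)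

noncomputable def theta (τ : Equiv.Perm (Fin n)) :
    Equiv.Perm (Fin n) × (Fin n → Fin r) × (Fin n → Fin c) :=
  (sigmaOf A (φ.trans τ), fun x => (Cof A (φ.trans τ) x).1, fun x => (Cof A (φ.trans τ) x).2)

lemma theta_mem (hA : A ∈ BM n r c) (τ : Equiv.Perm (Fin n)) : TTprop (theta A φ τ) := by
  refine ⟨?_, ?_, ?_, ?_⟩
  · funext x
    simp only [theta, Function.comp_apply]
    rw [cof_sigmaOf]
  · funext x
    simp only [theta, Function.comp_apply]
    rw [cof_sigmaOf]
  · intro i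
    obtain ⟨j, hj⟩ := hA.2.1 i
    have hpos : 0 < (univ.filter (fun a => Cof A (φ.trans τ) a = (i, j))).card := by
      rw [fiberCard]; exact hj
    obtain ⟨x, hx⟩ := Finset.card_pos.1 hpos
    have := (Finset.mem_filter.1 hx).2
    exact ⟨x, by simp only [theta]; rw [this]⟩
  · intro j
    obtain ⟨i, hi⟩ := hA.2.2 j
    have hpos : 0 < (univ.filter (fun a => Cof A (φ.trans τ) a = (i, j))).card := by
      rw [fiberCard]; exact hi
    obtain ⟨x, hx⟩ := Finset.card_pos.1 hpos
    have := (Finset.mem_filter.1 hx).2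
    exact ⟨x, by simp only [theta]; rw [this]⟩

lemma theta_chi (τ : Equiv.Perm (Fin n)) : chiMat (theta A φ τ) = A := by
  funext i j
  rw [chiMat]
  have : (univ.filter (fun a => (theta A φ τ).2.1 a = i ∧ (theta A φ τ).2.2 a = j)) =
      (univ.filter (fun a => Cof A (φ.trans τ) a = (i, j))) := by
    apply Finset.filter_congr
    intro x _
    simp only [theta, Prod.ext_iff]
  rw [this, fiberCard]

lemma cof_eq_pair (h : (Σ p : Fin r × Fin c, Fin (A p.1 p.2)) ≃ Fin n) (x : Fin n) :
    Cof A h x = ((Cof A h x).1, (Cof A h x).2) := rfl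

lemma theta_injective : Function.Injective (theta A φ) := by
  intro τ τ' heq
  have hf : (fun x => (Cof A (φ.trans τ) x).1) = (fun x => (Cof A (φ.trans τ') x).1) :=
    congrArg (fun z => z.2.1) heq
  have hg : (fun x => (Cof A (φ.trans τ) x).2) = (fun x => (Cof A (φ.trans τ') x).2) :=
    congrArg (fun z => z.2.2) heq
  have hσ : sigmaOf A (φ.trans τ) = sigmaOf A (φ.trans τ') := congrArg (fun z => z.1) heq
  have hC : Cof A (φ.trans τ) = Cof A (φ.trans τ') := by
    funext x
    rw [cof_eq_pair, cof_eq_pair A (φ.trans τ')]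
    rw [congrFun hf x, congrFun hg x]
  have hmu : muEq A (Cof A (φ.trans τ)) (fiberCard A (φ.trans τ)) =
      muEq A (Cof A (φ.trans τ')) (fiberCard A (φ.trans τ')) :=
    muEq_congr A _ _ _ _ hC
  have hh : φ.trans τ = φ.trans τ' := by
    have e1 : ∀ z, (φ.trans τ) z = sigmaOf A (φ.trans τ)
        ((muEq A (Cof A (φ.trans τ)) (fiberCard A (φ.trans τ))) z) := by
      intro z
      simp [sigmaOf]
    have e1' : ∀ z, (φ.trans τ') z = sigmaOf A (φ.trans τ')
        ((muEq A (Cof A (φ.trans τ')) (fiberCard A (φ.trans τ'))) z) := by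
      intro z
      simp [sigmaOf]
    apply Equiv.ext
    intro z
    rw [e1 z, e1' z, hσ, hmu]
  apply Equiv.ext
  intro y
  have := congrArg (fun (e : _ ≃ Fin n) => e (φ.symm y)) hh
  simpa using this

lemma theta_surjective_aux (x : Equiv.Perm (Fin n) × (Fin n → Fin r) × (Fin n → Fin c))
    (hx : TTprop x) (hchi : chiMat x = A) : ∃ τ, theta A φ τ = x := by
  classical
  obtain ⟨σ, f, g⟩ := x
  obtain ⟨hfσ, hgσ, hfs, hgs⟩ := hx
  set C : Fin n → Fin r × Fin c := fun a => (f a, g a) with hCdef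
  have hCc : ∀ p, (univ.filter (fun a => C a = p)).card = A p.1 p.2 := by
    intro p
    have : (univ.filter (fun a => C a = p)) = (univ.filter (fun a => f a = p.1 ∧ g a = p.2)) := by
      apply Finset.filter_congr
      intro a _
      simp [hCdef, Prod.ext_iff]
    rw [this]
    have := congrFun (congrFun hchi p.1) p.2
    exact this
  set μ' := muEq A C hCc with hμ'def
  refine ⟨φ.symm.trans (μ'.trans σ), ?_⟩
  have hcomp : φ.trans (φ.symm.trans (μ'.trans σ)) = μ'.trans σ := by
    apply Equiv.ext; intro z; simp
  have hCeq : Cof A (φ.trans (φ.symm.trans (μ'.trans σ))) = C := by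
    funext a
    rw [Cof, hcomp]
    have h1 : ((μ'.trans σ).symm a) = μ'.symm (σ.symm a) := by simp
    rw [h1, hμ'def, muEq_symm_fst]
    show C (σ.symm a) = C a
    have hfa : f (σ.symm a) = f a := by
      have := congrFun hfσ (σ.symm a)
      simp only [Function.comp_apply] at this
      rw [← this]
      simp
    have hga : g (σ.symm a) = g a := by
      have := congrFun hgσ (σ.symm a)
      simp only [Function.comp_apply] at this
      rw [← this]
      simp
    simp [hCdef, hfa, hga]
  have hmueq : muEq A (Cof A (φ.trans (φ.symm.trans (μ'.trans σ))))
      (fiberCard A (φ.trans (φ.symm.trans (μ'.trans σ)))) = μ' :=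
    muEq_congr A _ _ _ _ hCeq
  rw [theta]
  refine Prod.ext ?_ (Prod.ext ?_ ?_)
  · show sigmaOf A (φ.trans (φ.symm.trans (μ'.trans σ))) = σ
    rw [sigmaOf]
    apply Equiv.ext
    intro y
    rw [Equiv.trans_apply, hmueq, hcomp]
    simp
  · funext a
    show (Cof A (φ.trans (φ.symm.trans (μ'.trans σ))) a).1 = f a
    rw [hCeq]
  · funext a
    show (Cof A (φ.trans (φ.symm.trans (μ'.trans σ))) a).2 = g a
    rw [hCeq]

end Fiber

end Fib

section Count
open Equiv

variable {n r c : ℕ}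

instance : DecidablePred (TTprop (n := n) (r := r) (c := c)) := fun x => by
  unfold TTprop
  infer_instance

lemma card_fiber_eq_factorial (A : Matrix (Fin r) (Fin c) ℕ) (hA : A ∈ BM n r c) :
    Fintype.card {x : Equiv.Perm (Fin n) × (Fin n → Fin r) × (Fin n → Fin c) //
      TTprop x ∧ chiMat x = A} = n.factorial := by
  classical
  have hcard : Fintype.card (Σ p : Fin r × Fin c, Fin (A p.1 p.2)) = n := by
    rw [Fintype.card_sigma]
    simp only [Fintype.card_fin]
    rw [Fintype.sum_prod_type]
    exact hA.1
  let φ : (Σ p : Fin r × Fin c, Fin (A p.1 p.2)) ≃ Fin n := Fintype.equivFinOfCardEq hcard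
  have hbij : Function.Bijective (fun τ : Equiv.Perm (Fin n) =>
      (⟨theta A φ τ, theta_mem A φ hA τ, theta_chi A φ τ⟩ :
        {x : Equiv.Perm (Fin n) × (Fin n → Fin r) × (Fin n → Fin c) //
          TTprop x ∧ chiMat x = A})) := by
    constructor
    · intro τ τ' h
      exact theta_injective A φ (congrArg Subtype.val h)
    · rintro ⟨x, hx, hchi⟩
      obtain ⟨τ, hτ⟩ := theta_surjective_aux A φ x hx hchi
      exact ⟨τ, Subtype.ext hτ⟩
  rw [← Fintype.card_of_bijective hbij, Fintype.card_perm, Fintype.card_fin]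

set_option maxHeartbeats 1000000 in
lemma chiMat_mem_BM (x : Equiv.Perm (Fin n) × (Fin n → Fin r) × (Fin n → Fin c))
    (hx : TTprop x) : chiMat x ∈ BM n r c := by
  classical
  obtain ⟨σ, f, g⟩ := x
  obtain ⟨-, -, hfs, hgs⟩ := hx
  refine ⟨?_, ?_, ?_⟩
  · have key := Finset.card_eq_sum_card_fiberwise
      (f := fun a : Fin n => (f a, g a)) (s := univ) (t := univ)
      (fun a _ => mem_univ _)
    rw [Finset.card_univ, Fintype.card_fin, Fintype.sum_prod_type] at key
    conv_rhs => rw [key]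
    refine Finset.sum_congr rfl fun i _ => Finset.sum_congr rfl fun j _ => ?_
    show (univ.filter (fun a => f a = i ∧ g a = j)).card = _
    congr 1
    apply Finset.filter_congr
    intro a _
    simp [Prod.ext_iff]
  · intro i
    obtain ⟨a, ha⟩ := hfs i
    refine ⟨g a, Finset.card_pos.2 ⟨a, ?_⟩⟩
    show a ∈ univ.filter (fun b => f b = i ∧ g b = g a)
    exact Finset.mem_filter.2 ⟨Finset.mem_univ a, ha, rfl⟩
  · intro j
    obtain ⟨a, ha⟩ := hgs j
    refine ⟨f a, Finset.card_pos.2 ⟨a, ?_⟩⟩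
    show a ∈ univ.filter (fun b => f b = f a ∧ g b = j)
    exact Finset.mem_filter.2 ⟨Finset.mem_univ a, rfl, ha⟩

lemma card_T_eq_burge (n r c : ℕ) :
    Fintype.card {x : Equiv.Perm (Fin n) × (Fin n → Fin r) × (Fin n → Fin c) // TTprop x} =
      Nburge n r c * n.factorial := by
  classical
  rw [← Finset.card_univ]
  rw [Finset.card_eq_sum_card_fiberwise (f := fun x : {x : Equiv.Perm (Fin n) ×
      (Fin n → Fin r) × (Fin n → Fin c) // TTprop x} => chiMat x.1)
    (t := (bm_finite n r c).toFinset)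
    (fun x _ => (Set.Finite.mem_toFinset _).2 (chiMat_mem_BM x.1 x.2))]
  rw [Finset.sum_congr rfl (fun A hA => ?_), Finset.sum_const, smul_eq_mul, Nburge]
  have h1 : (Finset.univ.filter (fun x : {x : Equiv.Perm (Fin n) ×
      (Fin n → Fin r) × (Fin n → Fin c) // TTprop x} => chiMat x.1 = A)).card =
      Fintype.card {x : {x : Equiv.Perm (Fin n) ×
      (Fin n → Fin r) × (Fin n → Fin c) // TTprop x} // chiMat x.1 = A} :=
    (Fintype.card_subtype _).symm
  rw [h1]
  exact (Fintype.card_congr (Equiv.subtypeSubtypeEquivSubtypeInter _ _)).trans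
    (card_fiber_eq_factorial A ((Set.Finite.mem_toFinset _).1 hA))

end Count

noncomputable def stirling1 (n k : ℕ) : ℕ :=
  Set.ncard {σ : Equiv.Perm (Fin n) |
    (n - σ.support.card) + Multiset.card σ.cycleType = k}

section Assemble

variable {n r c : ℕ}

def decompT (n r c : ℕ) :
    {x : Equiv.Perm (Fin n) × (Fin n → Fin r) × (Fin n → Fin c) // TTprop x} ≃
      Σ σ : Equiv.Perm (Fin n),
        ({f : Fin n → Fin r // f ∘ σ = f ∧ Function.Surjective f} ×
         {g : Fin n → Fin c // g ∘ σ = g ∧ Function.Surjective g}) where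
  toFun x := ⟨x.1.1, ⟨⟨x.1.2.1, x.2.1, x.2.2.2.1⟩, ⟨x.1.2.2, x.2.2.1, x.2.2.2.2⟩⟩⟩
  invFun z := ⟨(z.1, z.2.1.1, z.2.2.1), z.2.1.2.1, z.2.2.2.1, z.2.1.2.2, z.2.2.2.2⟩
  left_inv x := rfl
  right_inv z := rfl

lemma card_T_eq_sum_orb (n r c : ℕ) :
    Fintype.card {x : Equiv.Perm (Fin n) × (Fin n → Fin r) × (Fin n → Fin c) // TTprop x} =
      ∑ σ : Equiv.Perm (Fin n),
        Sur (Fintype.card (OrbQ σ)) r * Sur (Fintype.card (OrbQ σ)) c := by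
  classical
  rw [Fintype.card_congr (decompT n r c), Fintype.card_sigma]
  refine Finset.sum_congr rfl fun σ _ => ?_
  rw [Fintype.card_prod, card_inv_surj σ r, card_inv_surj σ c]

lemma card_orbQ_le (σ : Equiv.Perm (Fin n)) : Fintype.card (OrbQ σ) ≤ n := by
  classical
  have := Fintype.card_le_of_surjective (Quotient.mk _ : Fin n → OrbQ σ)
    Quotient.mk_surjective
  simpa using this

lemma stirling1_eq_filter (n k : ℕ) :
    stirling1 n k =
      (univ.filter (fun σ : Equiv.Perm (Fin n) => Fintype.card (OrbQ σ) = k)).card := by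
  classical
  rw [stirling1]
  have hset : {σ : Equiv.Perm (Fin n) |
      (n - σ.support.card) + Multiset.card σ.cycleType = k} =
      {σ : Equiv.Perm (Fin n) | Fintype.card (OrbQ σ) = k} := by
    ext σ
    simp only [Set.mem_setOf_eq, card_orbQ]
  rw [hset, Set.ncard_eq_toFinset_card', Set.toFinset_setOf]

lemma key_nat (n r c : ℕ) :
    Nburge n r c * n.factorial =
      ∑ k ∈ Finset.range (n + 1), stirling1 n k * (Sur k r * Sur k c) := by
  classical
  rw [← card_T_eq_burge n r c, card_T_eq_sum_orb n r c]
  rw [← Finset.sum_fiberwise_of_maps_to (g := fun σ : Equiv.Perm (Fin n) =>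
    Fintype.card (OrbQ σ))
    (fun σ _ => Finset.mem_range.2 (Nat.lt_succ_of_le (card_orbQ_le σ)))]
  refine Finset.sum_congr rfl fun k _ => ?_
  rw [stirling1_eq_filter]
  rw [Finset.sum_congr rfl (fun σ hσ => ?_), Finset.sum_const, smul_eq_mul]
  have := (Finset.mem_filter.1 hσ).2
  rw [this]

lemma sur_eq_zero {k r : ℕ} (h : k < r) : Sur k r = 0 := by
  rw [Sur, Fintype.card_eq_zero_iff]
  constructor
  intro f
  have := Fintype.card_le_of_surjective f.1 f.2
  simp only [Fintype.card_fin] at this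
  omega

end Assemble

theorem two_sided_caylerian (n : ℕ) (s t : ℚ) :
    ((Nat.factorial n : ℕ) : ℚ) * BhatPoly n s t =
      ∑ k ∈ Finset.range (n + 1), (stirling1 n k : ℚ) * BalPoly k s * BalPoly k t := by
  classical
  rw [bhatPoly_eq, Finset.mul_sum]
  rw [Finset.sum_product]
  have hq : ∀ r ∈ Finset.range (n + 1), ∀ c ∈ Finset.range (n + 1),
      (n.factorial : ℚ) * ((Nburge n r c : ℚ) * (s ^ r * t ^ c)) =
      ∑ k ∈ Finset.range (n + 1),
        (stirling1 n k : ℚ) * ((Sur k r : ℚ) * s ^ r) * ((Sur k c : ℚ) * t ^ c) := by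
    intro r _ c _
    have h := key_nat n r c
    have h' : ((Nburge n r c : ℚ) * (n.factorial : ℚ)) =
        ∑ k ∈ Finset.range (n + 1), (stirling1 n k : ℚ) * ((Sur k r : ℚ) * (Sur k c : ℚ)) := by
      exact_mod_cast congrArg (fun z : ℕ => (z : ℚ)) h
    calc (n.factorial : ℚ) * ((Nburge n r c : ℚ) * (s ^ r * t ^ c))
        = ((Nburge n r c : ℚ) * (n.factorial : ℚ)) * (s ^ r * t ^ c) := by ring
      _ = (∑ k ∈ Finset.range (n + 1),
            (stirling1 n k : ℚ) * ((Sur k r : ℚ) * (Sur k c : ℚ))) * (s ^ r * t ^ c) := by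
          rw [h']
      _ = _ := by
          rw [Finset.sum_mul]
          exact Finset.sum_congr rfl fun k _ => by ring
  rw [Finset.sum_congr rfl (fun r hr => Finset.sum_congr rfl (fun c hc => hq r hr c hc))]
  rw [show (∑ r ∈ Finset.range (n + 1), ∑ c ∈ Finset.range (n + 1),
      ∑ k ∈ Finset.range (n + 1),
        (stirling1 n k : ℚ) * ((Sur k r : ℚ) * s ^ r) * ((Sur k c : ℚ) * t ^ c)) =
      ∑ k ∈ Finset.range (n + 1), ∑ r ∈ Finset.range (n + 1), ∑ c ∈ Finset.range (n + 1),
        (stirling1 n k : ℚ) * ((Sur k r : ℚ) * s ^ r) * ((Sur k c : ℚ) * t ^ c) from by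
    rw [Finset.sum_congr rfl fun r (_ : r ∈ Finset.range (n+1)) => (Finset.sum_comm (s := Finset.range (n+1)) (t := Finset.range (n+1))
      (f := fun c k => (stirling1 n k : ℚ) * ((Sur k r : ℚ) * s ^ r) * ((Sur k c : ℚ) * t ^ c)))]
    exact Finset.sum_comm]
  refine Finset.sum_congr rfl fun k hk => ?_
  have hk' : k + 1 ≤ n + 1 := Finset.mem_range.1 hk
  have hbs : BalPoly k s = ∑ r ∈ Finset.range (n + 1), (Sur k r : ℚ) * s ^ r := by
    rw [balPoly_eq]
    refine Finset.sum_subset (Finset.range_subset_range.2 hk') fun r _ hr => ?_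
    have : k < r := by
      simp only [Finset.mem_range, not_lt] at hr
      omega
    simp [sur_eq_zero this]
  have hbt : BalPoly k t = ∑ c ∈ Finset.range (n + 1), (Sur k c : ℚ) * t ^ c := by
    rw [balPoly_eq]
    refine Finset.sum_subset (Finset.range_subset_range.2 hk') fun r _ hr => ?_
    have : k < r := by
      simp only [Finset.mem_range, not_lt] at hr
      omega
    simp [sur_eq_zero this]
  rw [hbs, hbt, mul_assoc, Finset.sum_mul_sum, Finset.mul_sum]
  refine Finset.sum_congr rfl fun r _ => ?_
  rw [Finset.mul_sum]
  refine Finset.sum_congr rfl fun c _ => ?_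
  ring
end
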